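/- Let a ∈ (0,1). Then lim_{t→∞} ( Σ_{j=1}^∞ (1 − e^{−a^j t}) ) / log t = −1/log a. (The series converges for every t > 0.) -/

import Mathlib

open Filter Topology

private lemma one_sub_exp_neg_le (x : ℝ) : 1 - Real.exp (-x) ≤ x := by
  have := Real.add_one_le_exp (-x); linarith

private lemma one_sub_exp_neg_nonneg {x : ℝ} (hx : 0 ≤ x) : 0 ≤ 1 - Real.exp (-x) := by
  have : Real.exp (-x) ≤ 1 := Real.exp_le_one_iff.2 (by linarith)
  linarith

private lemma one_sub_exp_neg_le_one (x : ℝ) : 1 - Real.exp (-x) ≤ 1 := by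
  have := Real.exp_pos (-x); linarith

private lemma summ_aux (a t : ℝ) (ha0 : 0 < a) (ha1 : a < 1) (ht : 0 < t) :
    Summable (fun j : ℕ => 1 - Real.exp (-(a ^ (j + 1) * t))) := by
  have hgeo : Summable (fun j : ℕ => a ^ j * (a * t)) :=
    (summable_geometric_of_lt_one ha0.le ha1).mul_right _
  refine Summable.of_nonneg_of_le
    (fun j => one_sub_exp_neg_nonneg (by positivity))
    (fun j => ?_) hgeo
  calc 1 - Real.exp (-(a ^ (j + 1) * t)) ≤ a ^ (j + 1) * t := one_sub_exp_neg_le _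
    _ = a ^ j * (a * t) := by ring

private lemma sqrt_tendsto_atTop : Tendsto Real.sqrt atTop atTop := by
  refine tendsto_atTop_atTop.2 fun b => ⟨b ^ 2, fun x hx => Real.le_sqrt_of_sq_le hx⟩

private lemma sqrt_le_self' {s : ℝ} (hs : 1 ≤ s) : Real.sqrt s ≤ s := by
  have h0 : (0:ℝ) ≤ s := by linarith
  calc Real.sqrt s ≤ Real.sqrt (s * s) := Real.sqrt_le_sqrt (by nlinarith)
    _ = s := by rw [Real.sqrt_mul_self h0]

theorem stmt13 (a : ℝ) (ha0 : 0 < a) (ha1 : a < 1) :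
    (∀ t > 0, Summable (fun j : ℕ => 1 - Real.exp (-(a ^ (j + 1) * t)))) ∧
    Tendsto (fun t : ℝ => (∑' j : ℕ, (1 - Real.exp (-(a ^ (j + 1) * t)))) / Real.log t)
      atTop (𝓝 (-1 / Real.log a)) := by
  have hsum : ∀ t > 0, Summable (fun j : ℕ => 1 - Real.exp (-(a ^ (j + 1) * t))) :=
    fun t ht => summ_aux a t ha0 ha1 ht
  refine ⟨hsum, ?_⟩
  have hla : Real.log a < 0 := Real.log_neg ha0 ha1
  set L : ℝ := -Real.log a with hLdef
  have hL : 0 < L := by simp only [hLdef]; linarith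
  have hkey : -1 / Real.log a = 1 / L := by
    rw [hLdef, div_neg, neg_div]
  rw [hkey]
  -- sandwich functions of s = log t
  set lo : ℝ → ℝ := fun s =>
    (((s - Real.sqrt s) / L - 1) / s) * (1 - Real.exp (-Real.sqrt s)) with hlo_def
  set hi : ℝ → ℝ := fun s => (s / L + 1 + 1 / (1 - a)) / s with hhi_def
  have hlo_lim : Tendsto lo atTop (𝓝 (1 / L)) := by
    have hA : Tendsto (fun s : ℝ => ((s - Real.sqrt s) / L - 1) / s) atTop (𝓝 (1 / L)) := by
      have h1 : Tendsto (fun s : ℝ => (1 - (Real.sqrt s)⁻¹) / L - s⁻¹) atTop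
          (𝓝 ((1 - 0) / L - 0)) :=
        ((tendsto_const_nhds.sub sqrt_tendsto_atTop.inv_tendsto_atTop).div_const L).sub
          tendsto_inv_atTop_zero
      have heq : (1 - 0) / L - 0 = 1 / L := by norm_num
      rw [heq] at h1
      refine h1.congr' ?_
      filter_upwards [eventually_ge_atTop 1] with s hs
      have hs0 : (0:ℝ) < s := by linarith
      have hq0 : (0:ℝ) < Real.sqrt s := Real.sqrt_pos.2 hs0
      have hss : Real.sqrt s * Real.sqrt s = s := Real.mul_self_sqrt hs0.le
      field_simp
      linear_combination hss
    have hB : Tendsto (fun s : ℝ => 1 - Real.exp (-Real.sqrt s)) atTop (𝓝 (1 - 0)) := by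
      refine tendsto_const_nhds.sub ?_
      exact Real.tendsto_exp_atBot.comp (tendsto_neg_atTop_atBot.comp sqrt_tendsto_atTop)
    have := hA.mul hB
    rw [sub_zero, mul_one] at this
    exact this
  have hhi_lim : Tendsto hi atTop (𝓝 (1 / L)) := by
    have h1 : Tendsto (fun s : ℝ => 1 / L + (1 + 1 / (1 - a)) * s⁻¹) atTop
        (𝓝 (1 / L + (1 + 1 / (1 - a)) * 0)) :=
      tendsto_const_nhds.add (tendsto_inv_atTop_zero.const_mul _)
    rw [mul_zero, add_zero] at h1
    refine h1.congr' ?_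
    filter_upwards [eventually_gt_atTop 0] with s hs
    simp only [hhi_def]
    field_simp
    ring
  have hlog := Real.tendsto_log_atTop
  refine tendsto_of_tendsto_of_tendsto_of_le_of_le' (hlo_lim.comp hlog) (hhi_lim.comp hlog)
    ?_ ?_
  · -- lower bound
    filter_upwards [eventually_ge_atTop (Real.exp 1)] with t ht
    have ht0 : 0 < t := lt_of_lt_of_le (Real.exp_pos 1) ht
    set s := Real.log t with hs_def
    have hs1 : 1 ≤ s := (Real.le_log_iff_exp_le ht0).2 ht
    have hs0 : 0 < s := by linarith
    have hq := Real.sqrt_nonneg s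
    have hqle : Real.sqrt s ≤ s := sqrt_le_self' hs1
    have hx0 : 0 ≤ (s - Real.sqrt s) / L := div_nonneg (by linarith) hL.le
    set K : ℕ := ⌊(s - Real.sqrt s) / L⌋₊ with hK_def
    have hKle : (K : ℝ) * L ≤ s - Real.sqrt s := by
      have := Nat.floor_le hx0
      calc (K : ℝ) * L ≤ (s - Real.sqrt s) / L * L := by
            exact mul_le_mul_of_nonneg_right this hL.le
        _ = s - Real.sqrt s := by field_simp
    have hKge : (s - Real.sqrt s) / L - 1 ≤ (K : ℝ) :=
      (Nat.sub_one_lt_floor _).le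
    -- each of the first K terms is ≥ 1 - exp(-√s)
    have hterm : ∀ j < K, 1 - Real.exp (-Real.sqrt s) ≤ 1 - Real.exp (-(a ^ (j + 1) * t)) := by
      intro j hj
      have hexp : a ^ (j + 1) * t = Real.exp (s - (j + 1 : ℕ) * L) := by
        rw [Real.exp_sub, ← Real.exp_log ht0, ← hs_def]
        have : Real.exp ((j + 1 : ℕ) * L) = Real.exp L ^ (j + 1) := Real.exp_nat_mul L (j + 1)
        rw [this]
        have haL : Real.exp L = a⁻¹ := by
          rw [hLdef, Real.exp_neg, Real.exp_log ha0]
        rw [haL]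
        rw [inv_pow, div_inv_eq_mul, mul_comm]
      have hge : Real.sqrt s ≤ a ^ (j + 1) * t := by
        rw [hexp]
        have h1 : ((j + 1 : ℕ) : ℝ) * L ≤ (K : ℝ) * L := by
          have : ((j + 1 : ℕ) : ℝ) ≤ (K : ℝ) := by exact_mod_cast hj
          exact mul_le_mul_of_nonneg_right this hL.le
        have h2 : Real.sqrt s ≤ s - (j + 1 : ℕ) * L := by linarith
        calc Real.sqrt s ≤ s - (j + 1 : ℕ) * L := h2
          _ ≤ Real.exp (s - (j + 1 : ℕ) * L) := by
              have := Real.add_one_le_exp (s - (j + 1 : ℕ) * L); linarith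
      have : Real.exp (-(a ^ (j + 1) * t)) ≤ Real.exp (-Real.sqrt s) :=
        Real.exp_le_exp.2 (by linarith)
      linarith
    have hFlow : ((s - Real.sqrt s) / L - 1) * (1 - Real.exp (-Real.sqrt s)) ≤
        ∑' j : ℕ, (1 - Real.exp (-(a ^ (j + 1) * t))) := by
      have h1 : (K : ℝ) * (1 - Real.exp (-Real.sqrt s)) ≤
          ∑ j ∈ Finset.range K, (1 - Real.exp (-(a ^ (j + 1) * t))) := by
        calc (K : ℝ) * (1 - Real.exp (-Real.sqrt s))
            = ∑ _j ∈ Finset.range K, (1 - Real.exp (-Real.sqrt s)) := by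
              rw [Finset.sum_const, Finset.card_range, nsmul_eq_mul]
          _ ≤ _ := Finset.sum_le_sum (fun j hj => hterm j (Finset.mem_range.1 hj))
      have h2 : ∑ j ∈ Finset.range K, (1 - Real.exp (-(a ^ (j + 1) * t))) ≤
          ∑' j : ℕ, (1 - Real.exp (-(a ^ (j + 1) * t))) :=
        Summable.sum_le_tsum _ (fun j _ => one_sub_exp_neg_nonneg (by positivity)) (hsum t ht0)
      have h3 : ((s - Real.sqrt s) / L - 1) * (1 - Real.exp (-Real.sqrt s)) ≤
          (K : ℝ) * (1 - Real.exp (-Real.sqrt s)) := by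
        have hnn : 0 ≤ 1 - Real.exp (-Real.sqrt s) := one_sub_exp_neg_nonneg hq
        exact mul_le_mul_of_nonneg_right hKge hnn
      linarith
    show lo (Real.log t) ≤ _
    simp only [hlo_def, ← hs_def]
    rw [div_mul_eq_mul_div]
    exact (div_le_div_iff_of_pos_right hs0).2 hFlow
  · -- upper bound
    filter_upwards [eventually_ge_atTop (Real.exp 1)] with t ht
    have ht0 : 0 < t := lt_of_lt_of_le (Real.exp_pos 1) ht
    set s := Real.log t with hs_def
    have hs1 : 1 ≤ s := (Real.le_log_iff_exp_le ht0).2 ht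
    have hs0 : 0 < s := by linarith
    have hxc : 0 ≤ s / L := by positivity
    set N : ℕ := ⌈s / L⌉₊ with hN_def
    have hNge : s / L ≤ (N : ℝ) := Nat.le_ceil _
    have hNle : (N : ℝ) ≤ s / L + 1 := (Nat.ceil_lt_add_one hxc).le
    -- split the sum at N
    have hsplit := Summable.sum_add_tsum_nat_add (f := fun j : ℕ => 1 - Real.exp (-(a ^ (j + 1) * t)))
      N (hsum t ht0)
    -- head bound
    have hhead : ∑ j ∈ Finset.range N, (1 - Real.exp (-(a ^ (j + 1) * t))) ≤ (N : ℝ) := by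
      calc ∑ j ∈ Finset.range N, (1 - Real.exp (-(a ^ (j + 1) * t)))
          ≤ ∑ _j ∈ Finset.range N, (1 : ℝ) :=
            Finset.sum_le_sum (fun j _ => one_sub_exp_neg_le_one _)
        _ = (N : ℝ) := by simp
    -- tail bound
    have hsmall : a ^ (N + 1) * t ≤ 1 := by
      have hexp : a ^ (N + 1) * t = Real.exp (s - (N + 1 : ℕ) * L) := by
        rw [Real.exp_sub, ← Real.exp_log ht0, ← hs_def]
        rw [Real.exp_nat_mul L (N + 1)]
        have haL : Real.exp L = a⁻¹ := by
          rw [hLdef, Real.exp_neg, Real.exp_log ha0]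
        rw [haL]
        rw [inv_pow, div_inv_eq_mul, mul_comm]
      rw [hexp, Real.exp_le_one_iff]
      have h1 : s ≤ (N : ℝ) * L := by
        rw [← div_le_iff₀ hL] at *
        exact hNge
      have h2 : (N : ℝ) * L ≤ ((N + 1 : ℕ) : ℝ) * L := by
        have : (N : ℝ) ≤ ((N + 1 : ℕ) : ℝ) := by exact_mod_cast Nat.le_succ N
        exact mul_le_mul_of_nonneg_right this hL.le
      linarith
    have htail : ∑' j : ℕ, (1 - Real.exp (-(a ^ (j + N + 1) * t))) ≤ 1 / (1 - a) := by
      have hsummaj : Summable (fun j : ℕ => a ^ j * (a ^ (N + 1) * t)) :=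
        (summable_geometric_of_lt_one ha0.le ha1).mul_right _
      have h1 : ∑' j : ℕ, (1 - Real.exp (-(a ^ (j + N + 1) * t))) ≤
          ∑' j : ℕ, a ^ j * (a ^ (N + 1) * t) := by
        refine Summable.tsum_le_tsum (fun j => ?_) ?_ hsummaj
        · calc 1 - Real.exp (-(a ^ (j + N + 1) * t)) ≤ a ^ (j + N + 1) * t :=
              one_sub_exp_neg_le _
            _ = a ^ j * (a ^ (N + 1) * t) := by ring
        · have := hsum t ht0
          exact (summable_nat_add_iff N).2 this |>.congr (fun j => by ring_nf)
      have h2 : ∑' j : ℕ, a ^ j * (a ^ (N + 1) * t) = (1 - a)⁻¹ * (a ^ (N + 1) * t) := by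
        rw [tsum_mul_right, tsum_geometric_of_lt_one ha0.le ha1, mul_comm]
      have ha' : 0 < 1 - a := by linarith
      have h3 : (1 - a)⁻¹ * (a ^ (N + 1) * t) ≤ (1 - a)⁻¹ * 1 :=
        mul_le_mul_of_nonneg_left hsmall (by positivity)
      rw [h2] at h1
      calc ∑' j : ℕ, (1 - Real.exp (-(a ^ (j + N + 1) * t))) ≤ (1 - a)⁻¹ * (a ^ (N + 1) * t) := h1
        _ ≤ (1 - a)⁻¹ * 1 := h3
        _ = 1 / (1 - a) := by rw [mul_one, one_div]
    have hFup : ∑' j : ℕ, (1 - Real.exp (-(a ^ (j + 1) * t))) ≤ s / L + 1 + 1 / (1 - a) := by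
      have heq : ∑' j : ℕ, (1 - Real.exp (-((fun j : ℕ => a ^ (j + 1) * t) (j + N)))) =
          ∑' j : ℕ, (1 - Real.exp (-(a ^ (j + N + 1) * t))) := by
        congr 1
      rw [← hsplit]
      have : ∑' j : ℕ, (1 - Real.exp (-(a ^ (j + N + 1) * t))) =
          ∑' j : ℕ, (1 - Real.exp (-(a ^ (j + N + 1) * t))) := rfl
      calc ∑ j ∈ Finset.range N, (1 - Real.exp (-(a ^ (j + 1) * t))) +
            ∑' j : ℕ, (1 - Real.exp (-(a ^ (j + N + 1) * t)))
          ≤ (N : ℝ) + 1 / (1 - a) := add_le_add hhead htail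
        _ ≤ s / L + 1 + 1 / (1 - a) := by linarith
    show _ ≤ hi (Real.log t)
    simp only [hhi_def, ← hs_def]
    exact (div_le_div_iff_of_pos_right hs0).2 hFup
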